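/- There exists an infinite (countably infinite) family of permutations of the natural numbers such that for any two distinct permutations σ, τ in the family, the sequence j ↦ |σ(j) - τ(j)| tends to infinity. -/

import Mathlib

open Filter

/-- Blocks `[k*k, (k+1)*(k+1))` of length `2k+1`. -/
def blockEquiv : ℕ ≃ Σ k : ℕ, Fin (2*k+1) where
  toFun n := ⟨Nat.sqrt n, ⟨n - Nat.sqrt n * Nat.sqrt n, by
    have h1 := Nat.sqrt_le n
    have h2 := Nat.lt_succ_sqrt n
    have h3 : Nat.succ (Nat.sqrt n) * Nat.succ (Nat.sqrt n)
        = Nat.sqrt n * Nat.sqrt n + 2 * Nat.sqrt n + 1 := by rw [Nat.succ_eq_add_one]; ring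
    omega⟩⟩
  invFun p := p.1 * p.1 + p.2.val
  left_inv n := by
    have h1 := Nat.sqrt_le n
    simp only
    omega
  right_inv p := by
    obtain ⟨k, m, hm⟩ := p
    have hk : Nat.sqrt (k*k + m) = k := Nat.sqrt_add_eq k (by omega)
    simp only [hk]
    congr 1
    exact (Fin.heq_ext_iff (by rw [hk])).mpr (by simp)

open Fin.NatCast in
def myF (i : ℕ) : Equiv.Perm ℕ :=
  blockEquiv.permCongr.symm
    (Equiv.sigmaCongrRight fun k => Equiv.addLeft ((i * Nat.sqrt k : ℕ) : Fin (2*k+1)))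

open Fin.NatCast in
lemma myF_apply (i n : ℕ) :
    myF i n = Nat.sqrt n * Nat.sqrt n +
      (i * Nat.sqrt (Nat.sqrt n) + (n - Nat.sqrt n * Nat.sqrt n)) % (2 * Nat.sqrt n + 1) := by
  simp [myF, blockEquiv, Equiv.permCongr, Equiv.equivCongr, Equiv.addLeft, Fin.add_def,
    Fin.val_natCast, Nat.mod_add_mod]

/-- Circular distance bound: if `a = b + d` with `0 < d < L`, the residues of `a` and `b`
mod `L` differ by at least `min d (L - d)`. -/
lemma key_lemma (L b d : ℕ) (hd : 0 < d) (hdL : d < L) :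
    ((min d (L - d) : ℕ) : ℤ) ≤ |((b + d) % L : ℕ) - ((b % L : ℕ) : ℤ)| := by
  have hL : 0 < L := by omega
  have hB : b % L < L := Nat.mod_lt _ hL
  have h1 : (b + d) % L = (b % L + d) % L := by
    conv_lhs => rw [Nat.add_mod, Nat.mod_eq_of_lt hdL]
  by_cases h : b % L + d < L
  · rw [h1, Nat.mod_eq_of_lt h]
    rw [abs_of_nonneg (by push_cast; omega)]
    push_cast
    omega
  · have h2 : b % L + d - L < L := by omega
    have h3 : (b % L + d) % L = b % L + d - L := by
      rw [Nat.mod_eq_sub_mod (by omega), Nat.mod_eq_of_lt h2]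
    rw [h1, h3, abs_of_nonpos (by push_cast; omega)]
    push_cast
    omega

lemma sqrt_tendsto : Tendsto Nat.sqrt atTop atTop := by
  apply tendsto_atTop_atTop.2
  intro N
  exact ⟨N * N, fun n hn => (Nat.le_sqrt).2 (le_trans (Nat.le_refl _) hn)⟩

lemma main_bound (i j n N : ℕ) (hij : j < i)
    (hN : N ≤ Nat.sqrt (Nat.sqrt n)) (hd : i - j ≤ Nat.sqrt (Nat.sqrt n)) :
    (N : ℤ) ≤ |(myF i n : ℤ) - (myF j n : ℤ)| := by
  set k := Nat.sqrt n with hk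
  set c := Nat.sqrt k with hc
  set m := n - k * k with hm
  set L := 2 * k + 1 with hL
  have hcc : c * c ≤ k := Nat.sqrt_le k
  have hck : c ≤ k := Nat.sqrt_le_self k
  have hpos : 0 < i - j := by omega
  have hd' : 0 < (i - j) * c := Nat.mul_pos hpos (by omega)
  have hdk : (i - j) * c ≤ k := le_trans (Nat.mul_le_mul_right c hd) hcc
  have hdL : (i - j) * c < L := by omega
  have hij' : i = j + (i - j) := by omega
  have hsplit : i * c + m = (j * c + m) + (i - j) * c := by
    calc i * c + m = (j + (i - j)) * c + m := by rw [← hij']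
      _ = (j * c + m) + (i - j) * c := by ring
  have hgoal : (myF i n : ℤ) - myF j n
      = (((j * c + m) + (i - j) * c) % L : ℕ) - (((j * c + m) % L : ℕ) : ℤ) := by
    rw [myF_apply i n, myF_apply j n, ← hsplit]
    push_cast [← hk, ← hc, ← hm, ← hL]
    ring
  rw [hgoal]
  refine le_trans ?_ (key_lemma L (j * c + m) ((i - j) * c) hd' hdL)
  have h1 : N ≤ (i - j) * c := le_trans hN (Nat.le_mul_of_pos_left c hpos)
  have h2 : N ≤ min ((i - j) * c) (L - (i - j) * c) := by omega
  exact_mod_cast Nat.cast_le.2 h2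

lemma mydiv : ∀ i j : ℕ, i ≠ j →
    Tendsto (fun n : ℕ => |(myF i n : ℤ) - (myF j n : ℤ)|) atTop atTop := by
  intro i j hij
  rw [tendsto_atTop]
  intro N
  filter_upwards [(sqrt_tendsto.comp sqrt_tendsto).eventually_ge_atTop
    (max N.toNat (max (i - j) (j - i)))] with n hn
  simp only [Function.comp_apply] at hn
  have hb : ∀ N' : ℤ, (N'.toNat : ℤ) ≤ |(myF i n : ℤ) - (myF j n : ℤ)| →
      N ≤ |(myF i n : ℤ) - (myF j n : ℤ)| ∨ N' ≠ N := fun _ h => by omega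
  rcases Nat.lt_or_ge j i with h | h
  · have := main_bound i j n N.toNat h (le_trans (le_max_left _ _) hn)
      (le_trans (le_trans (le_max_left _ _) (le_max_right _ _)) hn)
    omega
  · have hji : j ≠ i ∧ i ≤ j := ⟨fun e => hij e.symm, h⟩
    have := main_bound j i n N.toNat (by omega) (le_trans (le_max_left _ _) hn)
      (le_trans (le_trans (le_max_right _ _) (le_max_right _ _)) hn)
    rw [abs_sub_comm]
    omega

/-- There are infinitely many pairwise divergent permutations of ℕ. -/
theorem divergent_permutations :
    ∃ F : ℕ → Equiv.Perm ℕ, Function.Injective F ∧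
      ∀ i j : ℕ, i ≠ j →
        Tendsto (fun n : ℕ => |(F i n : ℤ) - (F j n : ℤ)|) atTop atTop := by
  refine ⟨myF, ?_, mydiv⟩
  intro i j h
  by_contra hne
  have hT := mydiv i j hne
  rw [h] at hT
  simp only [sub_self, abs_zero] at hT
  obtain ⟨n, hn⟩ := (tendsto_atTop.1 hT 1).exists
  omega
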